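/- arXiv:1508.04207 — 4 statements merged into one kernel-verified Lean document; each statement's English description precedes it below -/
import Mathlib

section
/- Let S be a q×q real matrix whose minimal polynomial equals the characteristic polynomial of a matrix β, let σ be a column vector such that (β,σ) is controllable, and let G₁ = blockdiag(β,…,β) (p copies) and G₂ = blockdiag(σ,…,σ) (p copies). If matrices X and Y satisfy XS − G₁X = G₂Y, then Y = 0. -/
open Matrix

/-- Controllability of a single-input pair `(β, σ)`. -/
def IsControllablePair {nβ : ℕ} (β : Matrix (Fin nβ) (Fin nβ) ℝ)
    (σ : Matrix (Fin nβ) (Fin 1) ℝ) : Prop :=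
  (Matrix.of fun i (j : Fin nβ) => ((β ^ (j : ℕ)) * σ) i 0).rank = nβ

lemma key_pow {q nβ : ℕ} (S : Matrix (Fin q) (Fin q) ℝ)
    (β : Matrix (Fin nβ) (Fin nβ) ℝ) (σ : Matrix (Fin nβ) (Fin 1) ℝ)
    (X : Matrix (Fin nβ) (Fin q) ℝ) (y : Matrix (Fin 1) (Fin q) ℝ)
    (h : X * S = β * X + σ * y) (j : ℕ) :
    X * S ^ j = β ^ j * X + ∑ i ∈ Finset.range j, β ^ (j - (i + 1)) * σ * (y * S ^ i) := by
  induction j with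
  | zero => simp
  | succ j ih =>
    have hXS : X * S ^ (j + 1) = (X * S ^ j) * S := by
      rw [pow_succ, ← Matrix.mul_assoc]
    rw [hXS, ih, Matrix.add_mul, Matrix.sum_mul, Finset.sum_range_succ']
    have h1 : β ^ j * X * S = β ^ (j+1) * X + β ^ j * σ * y := by
      rw [Matrix.mul_assoc, h, Matrix.mul_add, pow_succ, Matrix.mul_assoc,
        Matrix.mul_assoc]
    have h2 : ∀ i ∈ Finset.range j,
        β ^ (j - (i + 1)) * σ * (y * S ^ i) * S
          = β ^ (j + 1 - (i + 1 + 1)) * σ * (y * S ^ (i + 1)) := by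
      intro i hi
      have he : j + 1 - (i + 1 + 1) = j - (i + 1) := by omega
      rw [he, pow_succ]
      simp only [Matrix.mul_assoc]
    rw [Finset.sum_congr rfl h2, h1]
    have h3 : β ^ (j + 1 - (0 + 1)) * σ * (y * S ^ 0) = β ^ j * σ * y := by
      simp
    rw [h3]
    abel

lemma core {q nβ : ℕ} (S : Matrix (Fin q) (Fin q) ℝ)
    (β : Matrix (Fin nβ) (Fin nβ) ℝ) (σ : Matrix (Fin nβ) (Fin 1) ℝ)
    (hmin : minpoly ℝ S = β.charpoly)
    (hctrb : IsControllablePair β σ) (hn : 0 < nβ)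
    (X : Matrix (Fin nβ) (Fin q) ℝ) (y : Matrix (Fin 1) (Fin q) ℝ)
    (h : X * S - β * X = σ * y) : y = 0 := by
  set P : Polynomial ℝ := β.charpoly with hP
  have hdeg : P.natDegree = nβ := by
    rw [hP, β.charpoly_natDegree_eq_dim, Fintype.card_fin]
  have hSP : (Polynomial.aeval S) P = 0 := by rw [← hmin]; exact minpoly.aeval ℝ S
  have hβP : (Polynomial.aeval β) P = 0 := β.aeval_self_charpoly
  have h' : X * S = β * X + σ * y := by
    rw [← h]; abel
  -- the c-matrices
  set c : ℕ → Matrix (Fin nβ) (Fin nβ) ℝ :=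
    fun i => ∑ j ∈ Finset.Ico (i + 1) (nβ + 1), P.coeff j • β ^ (j - (i + 1)) with hc
  -- main sum identity
  have H : ∑ i ∈ Finset.range nβ, (c i * σ) * (y * S ^ i) = 0 := by
    have e1 : ∑ j ∈ Finset.range (nβ + 1), P.coeff j • (X * S ^ j) = 0 := by
      have := Polynomial.aeval_eq_sum_range (R := ℝ) (p := P) S
      rw [hdeg] at this
      calc ∑ j ∈ Finset.range (nβ + 1), P.coeff j • (X * S ^ j)
          = X * ∑ j ∈ Finset.range (nβ + 1), P.coeff j • S ^ j := by
            rw [Matrix.mul_sum]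
            exact Finset.sum_congr rfl fun j _ => (Matrix.mul_smul _ _ _).symm
        _ = X * (Polynomial.aeval S) P := by rw [← this]
        _ = 0 := by rw [hSP, Matrix.mul_zero]
    have e2 : ∑ j ∈ Finset.range (nβ + 1), P.coeff j • (β ^ j * X)
        = ((Polynomial.aeval β) P) * X := by
      have := Polynomial.aeval_eq_sum_range (R := ℝ) (p := P) β
      rw [hdeg] at this
      rw [this, Matrix.sum_mul]
      exact Finset.sum_congr rfl fun j _ => (Matrix.smul_mul _ _ _).symm
    have e3 : ∑ j ∈ Finset.range (nβ + 1), ∑ i ∈ Finset.range j,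
        P.coeff j • (β ^ (j - (i + 1)) * σ * (y * S ^ i)) = 0 := by
      have expand : ∑ j ∈ Finset.range (nβ + 1), P.coeff j • (X * S ^ j)
          = ∑ j ∈ Finset.range (nβ + 1), P.coeff j • (β ^ j * X)
            + ∑ j ∈ Finset.range (nβ + 1), ∑ i ∈ Finset.range j,
                P.coeff j • (β ^ (j - (i + 1)) * σ * (y * S ^ i)) := by
        rw [← Finset.sum_add_distrib]
        refine Finset.sum_congr rfl fun j _ => ?_
        rw [key_pow S β σ X y h' j, smul_add, Finset.smul_sum]
      rw [e1, e2, hβP, Matrix.zero_mul, zero_add] at expand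
      exact expand.symm
    -- swap the double sum
    have e4 : ∑ i ∈ Finset.range (nβ + 1), ∑ j ∈ Finset.Ico (i + 1) (nβ + 1),
        P.coeff j • (β ^ (j - (i + 1)) * σ * (y * S ^ i)) = 0 := by
      rw [← e3]
      rw [Finset.range_eq_Ico, Finset.sum_Ico_Ico_comm' 0 (nβ + 1)
        (fun i j => P.coeff j • (β ^ (j - (i + 1)) * σ * (y * S ^ i)))]
      simp only [Finset.range_eq_Ico]
    have e5 : ∀ i, (c i * σ) * (y * S ^ i)
        = ∑ j ∈ Finset.Ico (i + 1) (nβ + 1),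
            P.coeff j • (β ^ (j - (i + 1)) * σ * (y * S ^ i)) := by
      intro i
      rw [hc]
      rw [Matrix.sum_mul, Matrix.sum_mul]
      refine Finset.sum_congr rfl fun j _ => ?_
      rw [Matrix.smul_mul, Matrix.smul_mul, Matrix.mul_assoc]
    have e6 : ∑ i ∈ Finset.range (nβ + 1), (c i * σ) * (y * S ^ i) = 0 := by
      rw [← e4]; exact Finset.sum_congr rfl fun i _ => e5 i
    have e7 : c nβ = 0 := by
      rw [hc]; simp
    rw [Finset.sum_range_succ, e7, Matrix.zero_mul, Matrix.zero_mul, add_zero] at e6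
    exact e6
  classical
  -- controllability matrix, Hankel coefficient matrix, and their product
  set C : Matrix (Fin nβ) (Fin nβ) ℝ :=
    Matrix.of fun i (j : Fin nβ) => ((β ^ (j : ℕ)) * σ) i 0 with hCdef
  set T : Matrix (Fin nβ) (Fin nβ) ℝ :=
    Matrix.of fun m j : Fin nβ => P.coeff ((m : ℕ) + (j : ℕ) + 1) with hTdef
  set M : Matrix (Fin nβ) (Fin nβ) ℝ :=
    Matrix.of fun r (i : Fin nβ) => (c (i : ℕ) * σ) r 0 with hMdef
  have hMCT : M = C * T := by
    ext r i
    have lhs : M r i = ∑ m ∈ Finset.range (nβ - (i : ℕ)),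
        P.coeff ((i : ℕ) + 1 + m) * ((β ^ m * σ) r 0) := by
      have step1 : M r i = ∑ j ∈ Finset.Ico ((i : ℕ) + 1) (nβ + 1),
          P.coeff j * ((β ^ (j - ((i : ℕ) + 1)) * σ) r 0) := by
        show (c (i : ℕ) * σ) r 0 = _
        rw [hc, Matrix.sum_mul, Matrix.sum_apply]
        refine Finset.sum_congr rfl fun j _ => ?_
        rw [Matrix.smul_mul, Matrix.smul_apply, smul_eq_mul]
      rw [step1, Finset.sum_Ico_eq_sum_range]
      have he : nβ + 1 - ((i : ℕ) + 1) = nβ - (i : ℕ) := by omega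
      rw [he]
      refine Finset.sum_congr rfl fun m _ => ?_
      have he2 : (i : ℕ) + 1 + m - ((i : ℕ) + 1) = m := by omega
      rw [he2]
    have rhs : (C * T) r i = ∑ m ∈ Finset.range nβ,
        ((β ^ m * σ) r 0) * P.coeff (m + (i : ℕ) + 1) := by
      rw [Matrix.mul_apply,
        ← Fin.sum_univ_eq_sum_range (fun m => ((β ^ m * σ) r 0) * P.coeff (m + (i : ℕ) + 1)) nβ]
      rfl
    have lhs2 : ∑ m ∈ Finset.range (nβ - (i : ℕ)),
        P.coeff ((i : ℕ) + 1 + m) * ((β ^ m * σ) r 0)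
        = ∑ m ∈ Finset.range nβ, P.coeff ((i : ℕ) + 1 + m) * ((β ^ m * σ) r 0) := by
      refine Finset.sum_subset (Finset.range_subset_range.mpr (by omega)) ?_
      intro m hm hnm
      rw [Finset.mem_range] at hm hnm
      have hi := i.isLt
      have hlt : P.natDegree < (i : ℕ) + 1 + m := by rw [hdeg]; omega
      rw [Polynomial.coeff_eq_zero_of_natDegree_lt hlt, zero_mul]
    rw [lhs, lhs2, rhs]
    refine Finset.sum_congr rfl fun m _ => ?_
    have he3 : (i : ℕ) + 1 + m = m + (i : ℕ) + 1 := by omega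
    rw [he3, mul_comm]
  -- T has nonzero determinant (anti-triangular with unit antidiagonal)
  have hTdet : T.det ≠ 0 := by
    have hperm := Matrix.det_permute' Fin.revPerm T
    have htri : (T.submatrix id ⇑(Fin.revPerm (n := nβ))).BlockTriangular id := by
      intro a b hab
      simp only [Matrix.submatrix_apply, id_eq, hTdef, Matrix.of_apply]
      have h1 : (b : ℕ) < (a : ℕ) := hab
      have h2 := a.isLt
      have h3 : ((Fin.revPerm b : Fin nβ) : ℕ) = nβ - ((b : ℕ) + 1) := Fin.val_rev b
      apply Polynomial.coeff_eq_zero_of_natDegree_lt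
      rw [hdeg, h3]
      omega
    have hdiag : (T.submatrix id ⇑(Fin.revPerm (n := nβ))).det = 1 := by
      rw [Matrix.det_of_upperTriangular htri]
      refine Finset.prod_eq_one fun a _ => ?_
      simp only [Matrix.submatrix_apply, id_eq, hTdef, Matrix.of_apply]
      have h2 := a.isLt
      have h3 : ((Fin.revPerm a : Fin nβ) : ℕ) = nβ - ((a : ℕ) + 1) := Fin.val_rev a
      have h4 : (a : ℕ) + ((Fin.revPerm a : Fin nβ) : ℕ) + 1 = nβ := by rw [h3]; omega
      rw [h4, ← hdeg]
      exact (β.charpoly_monic).coeff_natDegree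
    rw [hdiag] at hperm
    intro h0
    rw [h0, mul_zero] at hperm
    exact one_ne_zero hperm
  have hTunit : IsUnit T := (Matrix.isUnit_iff_isUnit_det T).2 (isUnit_iff_ne_zero.2 hTdet)
  have hTinj : Function.Injective T.mulVec := Matrix.mulVec_injective_iff_isUnit.2 hTunit
  -- C is injective from controllability
  have hCinj : Function.Injective C.mulVec := by
    have hrank : C.rank = nβ := hctrb
    have hrange : LinearMap.range C.mulVecLin = ⊤ := by
      apply Submodule.eq_top_of_finrank_eq
      rw [Module.finrank_fin_fun]
      exact hrank
    have hsurj : Function.Surjective C.mulVecLin := LinearMap.range_eq_top.1 hrange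
    have hinj : Function.Injective C.mulVecLin :=
      LinearMap.injective_iff_surjective.2 hsurj
    intro a b hab
    exact hinj (by simpa [Matrix.mulVecLin_apply] using hab)
  -- conclude y = 0
  ext t l
  have hv : M *ᵥ (fun i : Fin nβ => (y * S ^ (i : ℕ)) 0 l) = 0 := by
    funext r
    have H' : (∑ i ∈ Finset.range nβ, (c i * σ) * (y * S ^ i)) r l
        = (0 : Matrix (Fin nβ) (Fin q) ℝ) r l := by rw [H]
    rw [Matrix.sum_apply] at H'
    simp only [Matrix.zero_apply] at H'
    have H'' : ∑ i ∈ Finset.range nβ, (c i * σ) r 0 * (y * S ^ i) 0 l = 0 := by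
      rw [← H']
      refine (Finset.sum_congr rfl fun i _ => ?_).symm
      rw [Matrix.mul_apply, Fin.sum_univ_one]
    show (M *ᵥ fun i : Fin nβ => (y * S ^ (i : ℕ)) 0 l) r = (0 : Fin nβ → ℝ) r
    simp only [Matrix.mulVec, dotProduct, hMdef, Matrix.of_apply, Pi.zero_apply]
    rw [Fin.sum_univ_eq_sum_range (fun i => (c i * σ) r 0 * (y * S ^ i) 0 l) nβ]
    exact H''
  rw [hMCT] at hv
  have hv2 : T *ᵥ (fun i : Fin nβ => (y * S ^ (i : ℕ)) 0 l) = 0 := by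
    apply hCinj
    rw [Matrix.mulVec_mulVec, hv, Matrix.mulVec_zero]
  have hv3 : (fun i : Fin nβ => (y * S ^ (i : ℕ)) 0 l) = 0 := by
    apply hTinj
    rw [hv2, Matrix.mulVec_zero]
  have h00 := congrFun hv3 ⟨0, hn⟩
  simp only [pow_zero, Matrix.mul_one, Pi.zero_apply] at h00
  have ht : t = 0 := Subsingleton.elim t 0
  rw [ht]
  simpa using h00

/-- internal model property.  If the characteristic polynomial of `β`
equals the minimal polynomial of `S`, `(β, σ)` is controllable, and
`G₁ = blockdiag(β,…,β)`, `G₂ = blockdiag(σ,…,σ)` (p copies each), then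
`X S − G₁ X = G₂ Y` forces `Y = 0`. -/
theorem stmt0 {q nβ p : ℕ} (S : Matrix (Fin q) (Fin q) ℝ)
    (β : Matrix (Fin nβ) (Fin nβ) ℝ) (σ : Matrix (Fin nβ) (Fin 1) ℝ)
    (hmin : minpoly ℝ S = β.charpoly)
    (hctrb : IsControllablePair β σ)
    (G₁ : Matrix (Fin nβ × Fin p) (Fin nβ × Fin p) ℝ)
    (G₂ : Matrix (Fin nβ × Fin p) (Fin 1 × Fin p) ℝ)
    (hG₁ : G₁ = Matrix.blockDiagonal fun _ : Fin p => β)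
    (hG₂ : G₂ = Matrix.blockDiagonal fun _ : Fin p => σ)
    (X : Matrix (Fin nβ × Fin p) (Fin q) ℝ)
    (Y : Matrix (Fin 1 × Fin p) (Fin q) ℝ)
    (hXY : X * S - G₁ * X = G₂ * Y) :
    Y = 0 := by
  rcases Nat.eq_zero_or_pos q with hq | hq
  · subst hq
    ext t l
    exact l.elim0
  rcases Nat.eq_zero_or_pos nβ with hn | hn
  · exfalso
    subst hn
    have hchar1 : β.charpoly = 1 := by
      have hd : β.charpoly.natDegree = 0 := by
        rw [β.charpoly_natDegree_eq_dim, Fintype.card_fin]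
      exact Polynomial.eq_one_of_monic_natDegree_zero β.charpoly_monic hd
    haveI : Nonempty (Fin q) := ⟨⟨0, hq⟩⟩
    exact minpoly.ne_one ℝ S (hmin.trans hchar1)
  have key : ∀ k : Fin p, (Matrix.of fun (_ : Fin 1) l => Y (0, k) l) = 0 := by
    intro k
    apply core S β σ hmin hctrb hn (Matrix.of fun i l => X (i, k) l)
    ext i l
    have hE := congrFun (congrFun hXY (i, k)) l
    simp only [hG₁, hG₂, Matrix.sub_apply, Matrix.mul_apply, Matrix.blockDiagonal_apply,
      Fintype.sum_prod_type, Finset.sum_ite_eq, Finset.mem_univ, if_true, ite_mul, zero_mul,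
      mul_ite, mul_zero, Finset.univ_unique, Finset.sum_singleton, Fin.default_eq_zero] at hE ⊢
    simpa using hE
  ext tk l
  obtain ⟨t, k⟩ := tk
  have h0 := congrFun (congrFun (key k) t) l
  have ht : t = 0 := Subsingleton.elim t 0
  subst ht
  simpa using h0
end

section
/- Suppose all eigenvalues of S ∈ R^{q×q} lie on the imaginary axis, and suppose the closed-loop matrix family defines an exponentially stable delay system in the sense that the characteristic function det(λI − A₀ − A₁e^{−λτ}) has all roots with negative real part. Then for any matrix B of appropriate dimension there exists a unique matrix X satisfying XS = A₀X + A₁X e^{−Sτ} + B. -/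
open Matrix NormedSpace

lemma vecMul_exp_eig {q : ℕ} (A : Matrix (Fin q) (Fin q) ℂ) (v : Fin q → ℂ) (c : ℂ)
    (h : v ᵥ* A = c • v) : v ᵥ* (exp A) = Complex.exp c • v := by
  letI : SeminormedRing (Matrix (Fin q) (Fin q) ℂ) := Matrix.linftyOpSemiNormedRing
  letI : NormedRing (Matrix (Fin q) (Fin q) ℂ) := Matrix.linftyOpNormedRing
  letI : NormedAlgebra ℂ (Matrix (Fin q) (Fin q) ℂ) := Matrix.linftyOpNormedAlgebra
  have hpow : ∀ k : ℕ, v ᵥ* (A ^ k) = (c ^ k) • v := by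
    intro k; induction k with
    | zero => simp
    | succ k ih =>
        rw [pow_succ, ← Matrix.vecMul_vecMul, ih, Matrix.smul_vecMul, h, pow_succ, smul_smul,
          mul_comm]
  have hsum : Summable fun k : ℕ => ((k.factorial : ℂ))⁻¹ • A ^ k :=
    expSeries_summable' (𝕂 := ℂ) A
  have hterm : HasSum (fun k : ℕ => ((k.factorial : ℂ))⁻¹ • A ^ k) (exp A) := by
    rw [exp_eq_tsum ℂ]; exact hsum.hasSum
  have hcont : Continuous fun M : Matrix (Fin q) (Fin q) ℂ => v ᵥ* M := by
    apply continuous_pi; intro j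
    simp only [Matrix.vecMul, dotProduct]
    exact continuous_finset_sum _ fun i _ =>
      continuous_const.mul ((continuous_apply j).comp (continuous_apply i))
  let g : Matrix (Fin q) (Fin q) ℂ →+ (Fin q → ℂ) :=
    AddMonoidHom.mk' (fun M => v ᵥ* M) (fun M N => Matrix.vecMul_add M N v)
  have hmap : HasSum (fun k : ℕ => v ᵥ* (((k.factorial : ℂ))⁻¹ • A ^ k)) (v ᵥ* exp A) :=
    hterm.map g hcont
  have hmap' : HasSum (fun k : ℕ => (((k.factorial : ℂ))⁻¹ * c ^ k) • v) (v ᵥ* exp A) := by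
    have hsmul : ∀ (a : ℂ) (M : Matrix (Fin q) (Fin q) ℂ), v ᵥ* (a • M) = a • (v ᵥ* M) := by
      intro a M; ext j
      simp [Matrix.vecMul, dotProduct, Finset.mul_sum, mul_left_comm]
    refine HasSum.congr_fun hmap ?_
    intro k
    rw [hsmul, hpow, smul_smul]
  have hc : HasSum (fun k : ℕ => (((k.factorial : ℂ))⁻¹ * c ^ k) • v) (Complex.exp c • v) := by
    have h1 : HasSum (fun k : ℕ => ((k.factorial : ℂ))⁻¹ • c ^ k) (exp c) := by
      rw [exp_eq_tsum ℂ]; exact (expSeries_summable' (𝕂 := ℂ) c).hasSum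
    have := h1.smul_const v
    simpa [smul_eq_mul, ← Complex.exp_eq_exp_ℂ] using this
  have := hmap'.unique hc
  rw [this, Complex.exp_eq_exp_ℂ]

lemma map_matrix_exp {q : ℕ} (M : Matrix (Fin q) (Fin q) ℝ) :
    (exp M).map (algebraMap ℝ ℂ) = exp (M.map (algebraMap ℝ ℂ)) := by
  letI : SeminormedRing (Matrix (Fin q) (Fin q) ℝ) := Matrix.linftyOpSemiNormedRing
  letI : NormedRing (Matrix (Fin q) (Fin q) ℝ) := Matrix.linftyOpNormedRing
  letI : NormedAlgebra ℝ (Matrix (Fin q) (Fin q) ℝ) := Matrix.linftyOpNormedAlgebra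
  letI : SeminormedRing (Matrix (Fin q) (Fin q) ℂ) := Matrix.linftyOpSemiNormedRing
  letI : NormedRing (Matrix (Fin q) (Fin q) ℂ) := Matrix.linftyOpNormedRing
  letI : NormedAlgebra ℝ (Matrix (Fin q) (Fin q) ℂ) := Matrix.linftyOpNormedAlgebra
  letI : NormedAlgebra ℂ (Matrix (Fin q) (Fin q) ℂ) := Matrix.linftyOpNormedAlgebra
  letI : NormedAlgebra ℚ (Matrix (Fin q) (Fin q) ℝ) := NormedAlgebra.restrictScalars ℚ ℝ _
  have hcont : Continuous fun N : Matrix (Fin q) (Fin q) ℝ => N.map (algebraMap ℝ ℂ) := by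
    apply continuous_pi; intro i; apply continuous_pi; intro j
    exact Complex.continuous_ofReal.comp ((continuous_apply j).comp (continuous_apply i))
  have h1 := map_exp (RingHom.mapMatrix (m := Fin q) (algebraMap ℝ ℂ)) hcont M
  have h2 : (exp : Matrix (Fin q) (Fin q) ℂ → _) = exp := rfl
  exact h1

lemma key {n q : ℕ} (A₀' A₁' : Matrix (Fin n) (Fin n) ℂ) (S' : Matrix (Fin q) (Fin q) ℂ) (τ : ℝ)
    (hS : ∀ μ ∈ spectrum ℂ S', μ.re = 0)
    (hstab : ∀ lam : ℂ, 0 ≤ lam.re →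
      (lam • (1 : Matrix (Fin n) (Fin n) ℂ) - A₀' - Complex.exp (-lam * τ) • A₁').det ≠ 0)
    (Y : Matrix (Fin n) (Fin q) ℂ)
    (hY : Y * S' = A₀' * Y + A₁' * Y * exp ((-(τ : ℂ)) • S')) :
    Y = 0 := by
  by_contra hY0
  set E' : Matrix (Fin q) (Fin q) ℂ := exp ((-(τ : ℂ)) • S') with hE'
  -- the complexified Sylvester operator
  let Lc : Matrix (Fin n) (Fin q) ℂ →ₗ[ℂ] Matrix (Fin n) (Fin q) ℂ :=
    { toFun := fun Z => Z * S' - A₀' * Z - A₁' * Z * E'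
      map_add' := by intro Z W; simp only [Matrix.add_mul, Matrix.mul_add]; abel
      map_smul' := by intro c Z; simp [smul_mul_assoc, mul_smul_comm, smul_sub] }
  set K := LinearMap.ker Lc with hK
  have hYK : Y ∈ K := by
    simp only [hK, LinearMap.mem_ker]
    show Y * S' - A₀' * Y - A₁' * Y * E' = 0
    rw [hY]; abel
  -- S' commutes with E'
  have hcomm : S' * E' = E' * S' := by
    have : Commute S' ((-(τ : ℂ)) • S') := (Commute.refl S').smul_right _
    exact (this.exp_right)
  -- K is invariant under right multiplication by S'
  have hinv : ∀ Z ∈ K, Z * S' ∈ K := by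
    intro Z hZ
    simp only [hK, LinearMap.mem_ker] at hZ ⊢
    have hZ' : Z * S' - A₀' * Z - A₁' * Z * E' = 0 := hZ
    show Z * S' * S' - A₀' * (Z * S') - A₁' * (Z * S') * E' = 0
    have : Z * S' * S' - A₀' * (Z * S') - A₁' * (Z * S') * E'
        = (Z * S' - A₀' * Z - A₁' * Z * E') * S' := by
      simp only [Matrix.sub_mul, Matrix.mul_assoc, hcomm]
    rw [this, hZ', Matrix.zero_mul]
  -- right multiplication by S' as an endomorphism of K
  let R : Matrix (Fin n) (Fin q) ℂ →ₗ[ℂ] Matrix (Fin n) (Fin q) ℂ :=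
    { toFun := fun Z => Z * S'
      map_add' := by intro Z W; simp only [Matrix.add_mul]
      map_smul' := by intro c Z; simp [smul_mul_assoc] }
  let f : Module.End ℂ K := R.restrict hinv
  haveI : Nontrivial K := nontrivial_of_ne ⟨Y, hYK⟩ 0 (by
    simp only [ne_eq, Submodule.mk_eq_zero]; exact hY0)
  obtain ⟨μ, hμ⟩ := Module.End.exists_eigenvalue f
  obtain ⟨x, hx⟩ := hμ.exists_hasEigenvector
  obtain ⟨X₀, hX₀K⟩ := x
  have hX₀ : X₀ ≠ 0 := by
    have := hx.right
    simpa [ne_eq, Submodule.mk_eq_zero] using this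
  have heig : X₀ * S' = μ • X₀ := by
    have h := hx.apply_eq_smul
    have := congrArg Subtype.val h
    simpa [f, LinearMap.restrict_apply, R] using this
  -- μ is in the spectrum of S'
  obtain ⟨i₀, j₀, hij⟩ : ∃ i j, X₀ i j ≠ 0 := by
    by_contra hc
    push_neg at hc
    exact hX₀ (by ext i j; simpa using hc i j)
  have hv : (X₀ i₀) ≠ 0 := fun hv0 => hij (by rw [hv0]; rfl)
  have hrow : ∀ i, (X₀ i) ᵥ* S' = μ • (X₀ i) := by
    intro i; ext j
    have := congrFun (congrFun heig i) j
    simpa [Matrix.mul_apply, Matrix.vecMul, dotProduct] using this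
  have hμspec : μ ∈ spectrum ℂ S' := by
    rw [spectrum.mem_iff]
    intro hU
    rw [Matrix.isUnit_iff_isUnit_det] at hU
    have hdet : (μ • (1 : Matrix (Fin q) (Fin q) ℂ) - S').det = 0 := by
      rw [← Matrix.exists_vecMul_eq_zero_iff]
      refine ⟨X₀ i₀, hv, ?_⟩
      have h1 : (X₀ i₀) ᵥ* (μ • (1 : Matrix (Fin q) (Fin q) ℂ) - S')
          = (X₀ i₀) ᵥ* (μ • (1 : Matrix (Fin q) (Fin q) ℂ)) - (X₀ i₀) ᵥ* S' := by
        ext j; simp [Matrix.vecMul, dotProduct, Matrix.sub_apply, mul_sub,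
          Finset.sum_sub_distrib]
      have h2 : (X₀ i₀) ᵥ* (μ • (1 : Matrix (Fin q) (Fin q) ℂ)) = μ • (X₀ i₀) := by
        ext j; simp [Matrix.vecMul, dotProduct, Matrix.smul_apply, Matrix.one_apply,
          mul_comm]
      rw [h1, h2, hrow, sub_self]
    rw [Algebra.algebraMap_eq_smul_one] at hU
    exact (isUnit_iff_ne_zero.mp hU) hdet
  have hμre : μ.re = 0 := hS μ hμspec
  -- X₀ is a "left eigenvector" of E'
  have hrowE : ∀ i, (X₀ i) ᵥ* E' = Complex.exp (-μ * τ) • (X₀ i) := by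
    intro i
    have h1 : (X₀ i) ᵥ* ((-(τ : ℂ)) • S') = ((-(τ : ℂ)) * μ) • (X₀ i) := by
      have : (X₀ i) ᵥ* ((-(τ : ℂ)) • S') = (-(τ : ℂ)) • ((X₀ i) ᵥ* S') := by
        ext j; simp [Matrix.vecMul, dotProduct, Finset.mul_sum, mul_left_comm]
      rw [this, hrow, smul_smul]
    have := vecMul_exp_eig _ _ _ h1
    rw [hE']
    convert this using 2
    ring
  have hXE : X₀ * E' = Complex.exp (-μ * τ) • X₀ := by
    ext i j
    have := congrFun (hrowE i) j
    simpa [Matrix.mul_apply, Matrix.vecMul, dotProduct] using this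
  -- assemble (μ•1 - A₀' - e•A₁') * X₀ = 0
  set e := Complex.exp (-μ * τ) with he
  have hker : X₀ * S' - A₀' * X₀ - A₁' * X₀ * E' = 0 := hX₀K
  have hM : (μ • (1 : Matrix (Fin n) (Fin n) ℂ) - A₀' - e • A₁') * X₀ = 0 := by
    have h3 : A₁' * X₀ * E' = e • (A₁' * X₀) := by
      rw [Matrix.mul_assoc, hXE]; rw [Matrix.mul_smul]
    calc (μ • (1 : Matrix (Fin n) (Fin n) ℂ) - A₀' - e • A₁') * X₀
        = μ • X₀ - A₀' * X₀ - e • (A₁' * X₀) := by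
          simp [Matrix.sub_mul, smul_mul_assoc, Matrix.one_mul]
      _ = X₀ * S' - A₀' * X₀ - A₁' * X₀ * E' := by rw [← heig, ← h3]
      _ = 0 := hker
  have hdet : (μ • (1 : Matrix (Fin n) (Fin n) ℂ) - A₀' - e • A₁').det ≠ 0 :=
    hstab μ (le_of_eq hμre.symm)
  have hU : IsUnit (μ • (1 : Matrix (Fin n) (Fin n) ℂ) - A₀' - e • A₁') :=
    (Matrix.isUnit_iff_isUnit_det _).mpr (isUnit_iff_ne_zero.mpr hdet)
  obtain ⟨u, hu⟩ := hU
  have : X₀ = 0 := by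
    calc X₀ = ((↑u⁻¹ : Matrix (Fin n) (Fin n) ℂ) * ↑u) * X₀ := by
            rw [Units.inv_mul, Matrix.one_mul]
      _ = (↑u⁻¹ : Matrix (Fin n) (Fin n) ℂ) * ((↑u : Matrix (Fin n) (Fin n) ℂ) * X₀) := by
            rw [Matrix.mul_assoc]
      _ = 0 := by rw [hu, hM, Matrix.mul_zero]
  exact hX₀ this

/-- if all eigenvalues of `S` lie on the imaginary axis and the delay
system with matrices `A₀, A₁` and delay `τ` is exponentially stable (its
characteristic function `det(λI − A₀ − A₁ e^{−λτ})` has no root with `Re λ ≥ 0`),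
then for any `B` the Sylvester-type equation `X S = A₀ X + A₁ X e^{−Sτ} + B`
has a unique solution `X`. -/
theorem stmt2 {n q : ℕ} (A₀ A₁ : Matrix (Fin n) (Fin n) ℝ)
    (S : Matrix (Fin q) (Fin q) ℝ) (τ : ℝ) (hτ : 0 ≤ τ)
    (hS : ∀ μ ∈ spectrum ℂ (S.map (algebraMap ℝ ℂ)), μ.re = 0)
    (hstab : ∀ lam : ℂ, 0 ≤ lam.re →
      (lam • (1 : Matrix (Fin n) (Fin n) ℂ) - A₀.map (algebraMap ℝ ℂ)
        - Complex.exp (-lam * τ) • A₁.map (algebraMap ℝ ℂ)).det ≠ 0)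
    (B : Matrix (Fin n) (Fin q) ℝ) :
    ∃! X : Matrix (Fin n) (Fin q) ℝ,
      X * S = A₀ * X + A₁ * X * NormedSpace.exp (-τ • S) + B := by
  set E : Matrix (Fin q) (Fin q) ℝ := NormedSpace.exp (-τ • S) with hEdef
  set S' := S.map (algebraMap ℝ ℂ) with hS'def
  set A₀' := A₀.map (algebraMap ℝ ℂ) with hA₀'def
  set A₁' := A₁.map (algebraMap ℝ ℂ) with hA₁'def
  have hE : E.map (algebraMap ℝ ℂ) = exp ((-(τ : ℂ)) • S') := by
    rw [hEdef, map_matrix_exp]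
    congr 1
    ext i j
    simp [Matrix.map_apply, Matrix.smul_apply]
    exact Or.inl rfl
  -- the real Sylvester operator
  let L : Matrix (Fin n) (Fin q) ℝ →ₗ[ℝ] Matrix (Fin n) (Fin q) ℝ :=
    { toFun := fun X => X * S - A₀ * X - A₁ * X * E
      map_add' := by intro Z W; simp only [Matrix.add_mul, Matrix.mul_add]; abel
      map_smul' := by intro c Z; simp [smul_mul_assoc, mul_smul_comm, smul_sub] }
  have hiff : ∀ X : Matrix (Fin n) (Fin q) ℝ,
      (X * S = A₀ * X + A₁ * X * E + B) ↔ L X = B := by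
    intro X
    show _ ↔ X * S - A₀ * X - A₁ * X * E = B
    rw [sub_sub, sub_eq_iff_eq_add', add_assoc]
  -- injectivity of L
  have hker : ∀ X : Matrix (Fin n) (Fin q) ℝ, L X = 0 → X = 0 := by
    intro X hX
    have hXeq : X * S = A₀ * X + A₁ * X * E := by
      have hX' : X * S - A₀ * X - A₁ * X * E = 0 := hX
      rw [sub_sub, sub_eq_zero] at hX'
      exact hX'
    -- complexify
    set Y := X.map (algebraMap ℝ ℂ) with hYdef
    have hYeq : Y * S' = A₀' * Y + A₁' * Y * exp ((-(τ : ℂ)) • S') := by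
      have h := congrArg (fun M : Matrix (Fin n) (Fin q) ℝ => M.map (algebraMap ℝ ℂ)) hXeq
      rw [Matrix.map_add _ (fun a b => map_add (algebraMap ℝ ℂ) a b), Matrix.map_mul, Matrix.map_mul, Matrix.map_mul, Matrix.map_mul, hE]
        at h
      exact h
    have hY0 : Y = 0 := key A₀' A₁' S' τ hS hstab Y hYeq
    ext i j
    have := congrFun (congrFun hY0 i) j
    simpa [hYdef, Matrix.map_apply] using this
  have hinj : Function.Injective L :=
    LinearMap.ker_eq_bot.mp (LinearMap.ker_eq_bot'.mpr hker)
  have hsurj : Function.Surjective L := LinearMap.injective_iff_surjective.mp hinj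
  obtain ⟨X, hX⟩ := hsurj B
  refine ⟨X, (hiff X).2 hX, ?_⟩
  intro Y hYsol
  exact hinj (((hiff Y).1 hYsol).trans hX.symm)
end

section
/- Let (A,B) be stabilizable and (C,A) have the property that rank[[A−λI, B],[C, 0]] = n+p for every eigenvalue λ of S, and let (G₁,G₂) be the minimal p-copy internal model of S with G₂ of full column rank structure as in the definition. Then the augmented pair ( [[A,0],[G₂C,G₁]], [[B],[0]] ) is stabilizable. -/
open Matrix

/-- full row rank iff vecMul injective -/
lemma rank_eq_card_iff_forall {ι κ : Type*} [Fintype ι] [Fintype κ] {F : Type*} [Field F]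
    (M : Matrix ι κ F) :
    M.rank = Fintype.card ι ↔ ∀ v : ι → F, v ᵥ* M = 0 → v = 0 := by
  have h1 : M.rank = Mᵀ.rank := (Matrix.rank_transpose M).symm
  rw [h1, Matrix.rank]
  have hrn := LinearMap.finrank_range_add_finrank_ker (Mᵀ.mulVecLin)
  rw [Module.finrank_pi] at hrn
  constructor
  · intro h v hv
    have hker : LinearMap.ker Mᵀ.mulVecLin = ⊥ := by
      have : Module.finrank F (LinearMap.ker Mᵀ.mulVecLin) = 0 := by omega
      exact Submodule.finrank_eq_zero.mp this
    have : Mᵀ.mulVecLin v = 0 := by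
      simpa [Matrix.mulVecLin_apply, Matrix.mulVec_transpose] using hv
    simpa using (LinearMap.ker_eq_bot.mp hker).eq_iff.mp (by simpa using this)
  · intro h
    have hker : LinearMap.ker Mᵀ.mulVecLin = ⊥ := by
      rw [LinearMap.ker_eq_bot']
      intro v hv
      exact h v (by simpa [Matrix.mulVecLin_apply, Matrix.mulVec_transpose] using hv)
    rw [hker] at hrn
    simpa using hrn

lemma eval_charpoly' {k : ℕ} {F : Type*} [Field F] (M : Matrix (Fin k) (Fin k) F) (r : F) :
    (Matrix.charpoly M).eval r = (r • (1 : Matrix (Fin k) (Fin k) F) - M).det := by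
  rw [Matrix.charpoly, _root_.eval_det, Matrix.matPolyEquiv_charmatrix]
  simp [Matrix.scalar_apply, Matrix.smul_eq_diagonal_mul]

lemma mem_spectrum_iff_det {k : ℕ} (M : Matrix (Fin k) (Fin k) ℂ) (lam : ℂ) :
    lam ∈ spectrum ℂ M ↔ (lam • (1 : Matrix (Fin k) (Fin k) ℂ) - M).det = 0 := by
  simp [spectrum.mem_iff, Algebra.algebraMap_eq_smul_one,
    Matrix.isUnit_iff_isUnit_det, isUnit_iff_ne_zero]

lemma spectrum_transfer {nβ q : ℕ} (β : Matrix (Fin nβ) (Fin nβ) ℝ)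
    (S : Matrix (Fin q) (Fin q) ℝ) (hmin : β.charpoly = minpoly ℝ S)
    {lam : ℂ} (h : lam ∈ spectrum ℂ (β.map (algebraMap ℝ ℂ))) :
    lam ∈ spectrum ℂ (S.map (algebraMap ℝ ℂ)) := by
  rw [mem_spectrum_iff_det] at h ⊢
  rw [← eval_charpoly'] at h ⊢
  rw [Matrix.charpoly_map] at h ⊢
  rw [hmin] at h
  have hdvd : minpoly ℝ S ∣ S.charpoly := minpoly.dvd _ _ (Matrix.aeval_self_charpoly S)
  obtain ⟨c, hc⟩ := hdvd
  rw [hc, Polynomial.map_mul, Polynomial.eval_mul, h, zero_mul]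

lemma vecMul_pow_eq {nβ : ℕ} {β : Matrix (Fin nβ) (Fin nβ) ℂ} {lam : ℂ} {z : Fin nβ → ℂ}
    (h1 : z ᵥ* β = lam • z) (j : ℕ) : z ᵥ* (β ^ j) = lam ^ j • z := by
  induction j with
  | zero => simp [Matrix.vecMul_one]
  | succ j ih =>
      rw [pow_succ, ← Matrix.vecMul_vecMul, ih, Matrix.smul_vecMul, h1, pow_succ, smul_smul]

lemma vecMul_inj_of_isUnit {ι : Type*} [Fintype ι] [DecidableEq ι] {F : Type*} [Field F]
    {M : Matrix ι ι F} (h : IsUnit M) {v : ι → F} (hv : v ᵥ* M = 0) : v = 0 := by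
  have hinj := Matrix.vecMul_injective_iff_isUnit.mpr h
  have : v ᵥ* M = (0 : ι → F) ᵥ* M := by rw [hv, Matrix.zero_vecMul]
  exact hinj this

lemma ctrb_zero {nβ : ℕ} (β : Matrix (Fin nβ) (Fin nβ) ℝ) (σ : Matrix (Fin nβ) (Fin 1) ℝ)
    (hctrb : IsControllablePair β σ) {lam : ℂ} {z : Fin nβ → ℂ}
    (h1 : z ᵥ* (β.map (algebraMap ℝ ℂ)) = lam • z)
    (h2 : z ᵥ* (σ.map (algebraMap ℝ ℂ)) = 0) : z = 0 := by
  set f := algebraMap ℝ ℂ with hf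
  set K : Matrix (Fin nβ) (Fin nβ) ℝ :=
    Matrix.of fun i (j : Fin nβ) => ((β ^ (j : ℕ)) * σ) i 0 with hK
  have hKrank : K.rank = Fintype.card (Fin nβ) := by
    rw [Fintype.card_fin]; exact hctrb
  have hKunit : IsUnit K := by
    rw [← Matrix.vecMul_injective_iff_isUnit, Matrix.vecMul_injective_iff]
    rw [Fintype.linearIndependent_iff]
    intro g hg
    have hg' : g ᵥ* K = 0 := by
      funext j
      have := congr_fun hg j
      simpa [Matrix.vecMul, dotProduct, Finset.sum_apply, Pi.smul_apply] using this
    exact congr_fun ((rank_eq_card_iff_forall K).mp hKrank g hg')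
  have hKCunit : IsUnit (K.map f) := by
    have hdet : (K.map ⇑f).det = f K.det := by
      rw [← RingHom.mapMatrix_apply, ← RingHom.map_det]
    rw [Matrix.isUnit_iff_isUnit_det, hdet]
    rw [Matrix.isUnit_iff_isUnit_det] at hKunit
    exact hKunit.map f
  have hmappow : ∀ j : ℕ, (β ^ j).map f = (β.map f) ^ j := by
    intro j
    simp only [← RingHom.mapMatrix_apply, map_pow]
  have hzK : z ᵥ* (K.map f) = 0 := by
    funext j
    have hKmap : ∀ k, (K.map f) k j = (((β.map f) ^ (j : ℕ)) * (σ.map f)) k 0 := by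
      intro k
      simp only [Matrix.map_apply, hK, Matrix.of_apply]
      rw [← hmappow, ← Matrix.map_mul]
      rfl
    calc (z ᵥ* (K.map f)) j
        = (z ᵥ* (((β.map f) ^ (j : ℕ)) * (σ.map f))) 0 := by
          simp only [Matrix.vecMul, dotProduct]
          exact Finset.sum_congr rfl fun k _ => by rw [hKmap k]
      _ = ((z ᵥ* ((β.map f) ^ (j : ℕ))) ᵥ* (σ.map f)) 0 := by
          rw [Matrix.vecMul_vecMul]
      _ = 0 := by rw [vecMul_pow_eq h1, Matrix.smul_vecMul, h2]; simp
  exact vecMul_inj_of_isUnit hKCunit hzK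

lemma vecMul_blockDiagonal {m o : Type*} [Fintype m] [Fintype o] [DecidableEq o]
    {F : Type*} [Field F] {m' : Type*} (z : m × o → F) (D : o → Matrix m m' F) (k' : m') (i : o) :
    (z ᵥ* Matrix.blockDiagonal D) (k', i) = ((fun k => z (k, i)) ᵥ* D i) k' := by
  simp only [Matrix.vecMul, dotProduct, Matrix.blockDiagonal_apply,
    Fintype.sum_prod_type, mul_ite, mul_zero]
  rw [Finset.sum_comm]
  simp


/-- if `(A,B)` is stabilizable, the transmission-zero rank condition
holds at every eigenvalue of `S`, and `(G₁,G₂)` is the minimal p-copy internal model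
of `S` (whose eigenvalues all lie on the imaginary axis), then the augmented pair
`([[A,0],[G₂C,G₁]], [[B],[0]])` is stabilizable. -/
theorem stmt3 {n m p q nβ : ℕ}
    (A : Matrix (Fin n) (Fin n) ℝ) (B : Matrix (Fin n) (Fin m) ℝ)
    (C : Matrix (Fin p) (Fin n) ℝ) (S : Matrix (Fin q) (Fin q) ℝ)
    (β : Matrix (Fin nβ) (Fin nβ) ℝ) (σ : Matrix (Fin nβ) (Fin 1) ℝ)
    (hctrb : IsControllablePair β σ)
    (hmin : β.charpoly = minpoly ℝ S)
    (hSiR : ∀ μ ∈ spectrum ℂ (S.map (algebraMap ℝ ℂ)), μ.re = 0)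
    (hstab : ∀ lam : ℂ, 0 ≤ lam.re →
      (Matrix.fromCols (A.map (algebraMap ℝ ℂ) - lam • 1) (B.map (algebraMap ℝ ℂ))).rank = n)
    (hrank : ∀ lam ∈ spectrum ℂ (S.map (algebraMap ℝ ℂ)),
      (Matrix.fromBlocks (A.map (algebraMap ℝ ℂ) - lam • 1) (B.map (algebraMap ℝ ℂ))
        (C.map (algebraMap ℝ ℂ)) 0).rank = n + p)
    (G₁ : Matrix (Fin nβ × Fin p) (Fin nβ × Fin p) ℝ)
    (G₂ : Matrix (Fin nβ × Fin p) (Fin 1 × Fin p) ℝ)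
    (hG₁ : G₁ = Matrix.blockDiagonal fun _ : Fin p => β)
    (hG₂ : G₂ = Matrix.blockDiagonal fun _ : Fin p => σ) :
    ∀ lam : ℂ, 0 ≤ lam.re →
      (Matrix.fromCols
        (Matrix.fromBlocks (A.map (algebraMap ℝ ℂ) - lam • 1) 0
          ((G₂.map (algebraMap ℝ ℂ)) *
            (Matrix.of fun (ip : Fin 1 × Fin p) j => C ip.2 j).map (algebraMap ℝ ℂ))
          (G₁.map (algebraMap ℝ ℂ) - lam • 1))
        (Matrix.fromRows (B.map (algebraMap ℝ ℂ)) 0)).rank = n + nβ * p := by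
  intro lam hlam
  set f := algebraMap ℝ ℂ with hf
  set Ac := A.map f
  set Bc := B.map f
  set Cc := C.map f
  set βc := β.map f with hβc
  set σc := σ.map f with hσc
  have hG₁c : G₁.map f = Matrix.blockDiagonal fun _ : Fin p => βc := by
    rw [hG₁, Matrix.blockDiagonal_map _ _ (map_zero f)]
  have hG₂c : G₂.map f = Matrix.blockDiagonal fun _ : Fin p => σc := by
    rw [hG₂, Matrix.blockDiagonal_map _ _ (map_zero f)]
  have hcard : n + nβ * p = Fintype.card (Fin n ⊕ Fin nβ × Fin p) := by simp
  rw [hcard, rank_eq_card_iff_forall]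
  intro v hv
  set x : Fin n → ℂ := fun i => v (Sum.inl i) with hx
  set z : Fin nβ × Fin p → ℂ := fun ki => v (Sum.inr ki) with hz
  rw [Matrix.vecMul_fromCols] at hv
  have hv1 := congr_arg (fun w => w ∘ Sum.inl) hv
  have hv2 := congr_arg (fun w => w ∘ Sum.inr) hv
  simp only [Sum.elim_comp_inl, Sum.elim_comp_inr] at hv1 hv2
  rw [Matrix.vecMul_fromBlocks] at hv1
  -- hv1 : Sum.elim (x ᵥ* (Ac - lam•1) + z ᵥ* (G₂c * C')) (x ᵥ* 0 + z ᵥ* (G₁c - lam•1)) = 0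
  have hEq1 : x ᵥ* (Ac - lam • 1) +
      z ᵥ* ((G₂.map f) * ((Matrix.of fun (ip : Fin 1 × Fin p) j => C ip.2 j).map f)) = 0 := by
    have := congr_arg (fun w => w ∘ Sum.inl) hv1
    simp at this; exact this
  have hEq2 : z ᵥ* (G₁.map f - lam • 1) = 0 := by
    have := congr_arg (fun w => w ∘ Sum.inr) hv1
    simp at this; exact this
  have hEq3 : x ᵥ* Bc = 0 := by
    have : (Sum.elim (v ∘ Sum.inl) (v ∘ Sum.inr)) ᵥ* Matrix.fromRows Bc 0 = 0 := by
      have hve : Sum.elim (v ∘ Sum.inl) (v ∘ Sum.inr) = v := by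
        funext i; cases i <;> rfl
      rw [hve]; exact hv2
    rw [Matrix.sumElim_vecMul_fromRows] at this
    simp at this; exact this
  -- block diagonal structure of hEq2
  have hG₁sub : G₁.map f - lam • 1 =
      Matrix.blockDiagonal fun _ : Fin p => (βc - lam • 1) := by
    rw [hG₁c]
    ext ⟨k, i⟩ ⟨k', i'⟩
    by_cases h : i = i'
    · subst h
      by_cases hk : k = k'
      · subst hk; simp [Matrix.blockDiagonal_apply, Matrix.one_apply]
      · simp [Matrix.blockDiagonal_apply, Matrix.one_apply, hk, Prod.ext_iff]
    · simp [Matrix.blockDiagonal_apply, Matrix.one_apply, h, Prod.ext_iff]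
  have hzcopy : ∀ i : Fin p, (fun k => z (k, i)) ᵥ* (βc - lam • 1) = 0 := by
    intro i
    funext k'
    have h2 : z ᵥ* Matrix.blockDiagonal (fun _ : Fin p => (βc - lam • 1)) = 0 := by
      rw [← hG₁sub]; exact hEq2
    have := congr_fun h2 (k', i)
    rw [vecMul_blockDiagonal z _ k' i] at this
    exact this
  by_cases hβspec : lam ∈ spectrum ℂ βc
  · -- λ is an eigenvalue of S
    have hSspec : lam ∈ spectrum ℂ (S.map f) := spectrum_transfer β S hmin hβspec
    set u : Fin p → ℂ := fun i => ((fun k => z (k, i)) ᵥ* σc) 0 with hu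
    -- z ᵥ* (G₂c * C') = u ᵥ* Cc
    have hzG₂ : z ᵥ* (G₂.map f) = fun i0i : Fin 1 × Fin p => u i0i.2 := by
      funext i0i
      obtain ⟨i0, i⟩ := i0i
      rw [hG₂c, vecMul_blockDiagonal z _ i0 i]
      have : i0 = 0 := Subsingleton.elim _ _
      rw [this]
    have hCc : z ᵥ* ((G₂.map f) * ((Matrix.of fun (ip : Fin 1 × Fin p) j => C ip.2 j).map f))
        = u ᵥ* Cc := by
      rw [← Matrix.vecMul_vecMul, hzG₂]
      funext j
      simp only [Matrix.vecMul, dotProduct, Fintype.sum_prod_type, Matrix.map_apply,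
        Matrix.of_apply]
      simp [Cc]
    rw [hCc] at hEq1
    -- apply hrank
    have hfull := (rank_eq_card_iff_forall _).mp
      (by simpa using hrank lam hSspec) (Sum.elim x u)
    have hxu : Sum.elim x u = 0 := by
      apply hfull
      rw [Matrix.vecMul_fromBlocks]
      funext j
      cases j with
      | inl j => simpa using congr_fun hEq1 j
      | inr j =>
          simp only [Sum.elim_comp_inl, Sum.elim_comp_inr, Sum.elim_inr]
          simpa using congr_fun hEq3 j
    have hx0 : x = 0 := by funext i; exact congr_fun hxu (Sum.inl i)
    have hu0 : u = 0 := by funext i; exact congr_fun hxu (Sum.inr i)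
    have hz0 : z = 0 := by
      funext ki
      obtain ⟨k, i⟩ := ki
      have h1 : (fun k => z (k, i)) ᵥ* βc = lam • (fun k => z (k, i)) := by
        have hs := hzcopy i
        rw [Matrix.vecMul_sub] at hs
        have hsm : (fun k => z (k, i)) ᵥ* (lam • (1 : Matrix (Fin nβ) (Fin nβ) ℂ))
            = lam • fun k => z (k, i) := by
          funext k'
          simp [Matrix.vecMul, dotProduct, Matrix.smul_apply, Matrix.one_apply,
            mul_ite, mul_comm]
        rw [hsm] at hs
        exact sub_eq_zero.mp hs
      have h2 : (fun k => z (k, i)) ᵥ* σc = 0 := by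
        funext j
        have : j = 0 := Subsingleton.elim _ _
        rw [this]
        exact congr_fun hu0 i
      have := ctrb_zero β σ hctrb h1 h2
      exact congr_fun this k
    funext i
    cases i with
    | inl i => exact congr_fun hx0 i
    | inr ki => exact congr_fun hz0 ki
  · -- λ is not an eigenvalue of β : G₁ - λ is invertible
    have hdet : (βc - lam • 1).det ≠ 0 := by
      intro h0
      apply hβspec
      rw [mem_spectrum_iff_det]
      have : lam • (1 : Matrix (Fin nβ) (Fin nβ) ℂ) - βc = -(βc - lam • 1) := (neg_sub _ _).symm
      rw [this, Matrix.det_neg, h0, mul_zero]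
    have hunit : IsUnit (G₁.map f - lam • 1) := by
      rw [Matrix.isUnit_iff_isUnit_det, hG₁sub, Matrix.det_blockDiagonal]
      exact isUnit_iff_ne_zero.mpr (Finset.prod_ne_zero_iff.mpr fun i _ => hdet)
    have hz0 : z = 0 := vecMul_inj_of_isUnit hunit hEq2
    have hx0 : x = 0 := by
      have hr := (rank_eq_card_iff_forall _).mp (by simpa using hstab lam hlam) x
      apply hr
      rw [Matrix.vecMul_fromCols]
      have hA : x ᵥ* (Ac - lam • 1) = 0 := by
        rw [hz0] at hEq1
        simpa using hEq1
      rw [hA, hEq3]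
      simp
    funext i
    cases i with
    | inl i => exact congr_fun hx0 i
    | inr ki => exact congr_fun hz0 ki
end

section
/- Let H ∈ R^{N×N} be the lower-right block of the Laplacian of a digraph Ḡ on {0,1,…,N}. Then all eigenvalues of H have positive real part if and only if Ḡ contains a directed spanning tree with node 0 as the root. -/
open Matrix Finset

/-- spectral membership for complex matrices via eigenvectors -/
lemma stmt19_mem_spectrum {n : ℕ} (M : Matrix (Fin n) (Fin n) ℂ) (μ : ℂ) :
    μ ∈ spectrum ℂ M ↔ ∃ v, v ≠ 0 ∧ M.mulVec v = μ • v := by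
  have halg : ∀ w : Fin n → ℂ,
      (algebraMap ℂ (Matrix (Fin n) (Fin n) ℂ) μ).mulVec w = μ • w := by
    intro w; funext x
    simp [Matrix.algebraMap_eq_diagonal, Matrix.mulVec_diagonal]
  rw [spectrum.mem_iff, Matrix.isUnit_iff_isUnit_det, isUnit_iff_ne_zero, not_not,
    ← Matrix.exists_mulVec_eq_zero_iff]
  constructor
  · rintro ⟨v, hv, h⟩
    refine ⟨v, hv, ?_⟩
    rw [Matrix.sub_mulVec, halg, sub_eq_zero] at h
    exact h.symm
  · rintro ⟨v, hv, h⟩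
    refine ⟨v, hv, ?_⟩
    rw [Matrix.sub_mulVec, halg, sub_eq_zero]
    exact h.symm

/-- let `H` be the lower-right `N×N` block of the Laplacian of a
weighted digraph on `{0,1,…,N}` (node 0 having no incoming edges, edge `(j,i)`
present iff `a i j > 0`).  Then all eigenvalues of `H` have positive real part iff
the digraph contains a directed spanning tree rooted at node 0, i.e. every node is
reachable from node 0. -/
theorem stmt19 {N : ℕ} (a : Fin (N + 1) → Fin (N + 1) → ℝ)
    (hnonneg : ∀ i j, 0 ≤ a i j) (hdiag : ∀ i, a i i = 0)
    (hroot : ∀ j, a 0 j = 0)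
    (L : Matrix (Fin (N + 1)) (Fin (N + 1)) ℝ)
    (hL : ∀ i j, L i j = if i = j then ∑ k ∈ Finset.univ.erase i, a i k else -a i j)
    (H : Matrix (Fin N) (Fin N) ℝ)
    (hH : ∀ i j : Fin N, H i j = L i.succ j.succ) :
    (∀ μ ∈ spectrum ℂ (H.map (algebraMap ℝ ℂ)), 0 < μ.re) ↔
      ∀ i : Fin (N + 1), Relation.ReflTransGen (fun j i => 0 < a i j) 0 i := by
  classical
  set reach : Fin (N + 1) → Prop :=
    Relation.ReflTransGen (fun j i => 0 < a i j) 0 with hreachdef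
  have hedge : ∀ x y : Fin (N + 1), ¬ reach x → reach y → a x y = 0 := by
    intro x y hx hy
    by_contra h
    exact hx (hy.tail (lt_of_le_of_ne (hnonneg x y) (Ne.symm h)))
  -- diagonal entries
  set d : Fin N → ℝ := fun i => ∑ k, a i.succ k with hd
  have hsplit : ∀ i j : Fin N, H i j = (if i = j then d i else 0) - a i.succ j.succ := by
    intro i j
    rw [hH, hL]
    rcases eq_or_ne i j with h | h
    · subst h
      rw [if_pos rfl, if_pos rfl, hdiag, sub_zero, hd]
      exact Finset.sum_erase _ (hdiag i.succ)
    · rw [if_neg (by simpa [Fin.succ_inj] using h), if_neg h, zero_sub]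
  have hrow : ∀ i : Fin N, d i = a i.succ 0 + ∑ j : Fin N, a i.succ j.succ := by
    intro i
    exact Fin.sum_univ_succ _
  constructor
  · -- all eigenvalues positive real part → spanning tree
    intro hspec
    by_contra hcon
    push_neg at hcon
    obtain ⟨i₀, hi₀⟩ := hcon
    have hi₀0 : i₀ ≠ 0 := by
      intro h; exact hi₀ (h ▸ Relation.ReflTransGen.refl)
    -- the set of unreachable nodes (as a predicate on Fin N via succ)
    set p : Fin N → Prop := fun j => ¬ reach j.succ with hp
    set S' := {j : Fin N // p j} with hS'
    set HS : Matrix S' S' ℝ := Matrix.of (fun i j => H i.1 j.1) with hHS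
    have hsub : ∀ (f : Fin N → ℝ), ∑ j ∈ univ.filter p, f j = ∑ j : S', f j.1 := by
      intro f
      exact Finset.sum_subtype _ (by simp) f
    have hT : ∀ i : S', ∑ j ∈ univ.filter p, a i.1.succ j.succ = d i.1 := by
      intro i
      have h0 : a i.1.succ 0 = 0 := hedge _ _ i.2 Relation.ReflTransGen.refl
      have hsplitsum := Finset.sum_filter_add_sum_filter_not univ p
        (fun j => a i.1.succ j.succ)
      have hz : ∑ j ∈ univ.filter (fun j => ¬ p j), a i.1.succ j.succ = 0 := by
        refine Finset.sum_eq_zero ?_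
        intro j hj
        rw [Finset.mem_filter] at hj
        exact hedge _ _ i.2 (not_not.mp hj.2)
      rw [hrow i.1, h0, zero_add, ← hsplitsum, hz, add_zero]
    have hrowsum : ∀ i : S', ∑ j : S', HS i j = 0 := by
      intro i
      have : ∑ j : S', HS i j = ∑ j ∈ univ.filter p, H i.1 j := (hsub fun j => H i.1 j).symm
      rw [this]
      have : ∑ j ∈ univ.filter p, H i.1 j
          = (∑ j ∈ univ.filter p, if i.1 = j then d i.1 else 0)
            - ∑ j ∈ univ.filter p, a i.1.succ j.succ := by
        rw [← Finset.sum_sub_distrib]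
        exact Finset.sum_congr rfl fun j _ => hsplit i.1 j
      rw [this, hT i, Finset.sum_ite_eq _ i.1 (fun _ => d i.1),
        if_pos (Finset.mem_filter.mpr ⟨Finset.mem_univ _, i.2⟩), sub_self]
    -- a nonzero element of S'
    have hmem : p (i₀.pred hi₀0) := by
      rw [hp]
      simpa [Fin.succ_pred] using hi₀
    have hne : Nonempty S' := ⟨⟨i₀.pred hi₀0, hmem⟩⟩
    have hdetS : HS.det = 0 := by
      rw [← Matrix.exists_mulVec_eq_zero_iff]
      refine ⟨fun _ => 1, ?_, ?_⟩
      · intro h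
        exact one_ne_zero (congrFun h hne.some)
      · funext i
        simp only [Matrix.mulVec, dotProduct, mul_one, Pi.zero_apply]
        exact hrowsum i
    obtain ⟨z, hz, hzmul⟩ := Matrix.exists_vecMul_eq_zero_iff.mpr hdetS
    set y : Fin N → ℝ := fun j => if h : p j then z ⟨j, h⟩ else 0 with hy
    have hyne : y ≠ 0 := by
      obtain ⟨w, hw⟩ := Function.ne_iff.mp hz
      intro h
      apply hw
      have := congrFun h w.1
      simpa [hy, dif_pos w.2] using this
    have hvec : Matrix.vecMul y H = 0 := by
      funext j
      simp only [Matrix.vecMul, dotProduct, Pi.zero_apply]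
      have hstep : ∑ i, y i * H i j = ∑ i ∈ univ.filter p, y i * H i j := by
        refine (Finset.sum_subset (Finset.subset_univ _) ?_).symm
        intro x _ hx
        rw [Finset.mem_filter] at hx
        have : ¬ p x := fun h => hx ⟨Finset.mem_univ x, h⟩
        rw [hy]; simp [dif_neg this]
      rw [hstep, hsub fun i => y i * H i j]
      have hyval : ∀ i : S', y i.1 = z i := by
        intro i; rw [hy]; simp [dif_pos i.2]
      by_cases hj : p j
      · have := congrFun hzmul ⟨j, hj⟩
        simp only [Matrix.vecMul, dotProduct, Pi.zero_apply] at this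
        rw [← this]
        exact Finset.sum_congr rfl fun i _ => by rw [hyval i]; rfl
      · refine Finset.sum_eq_zero fun i _ => ?_
        have hij : i.1 ≠ j := fun h => hj (h ▸ i.2)
        have : H i.1 j = - a i.1.succ j.succ := by
          rw [hsplit, if_neg hij, zero_sub]
        rw [this, hedge _ _ i.2 (not_not.mp fun h => hj h)]
        ring
    have hdetH : H.det = 0 :=
      Matrix.exists_vecMul_eq_zero_iff.mp ⟨y, hyne, hvec⟩
    have h0mem : (0 : ℂ) ∈ spectrum ℂ (H.map (algebraMap ℝ ℂ)) := by
      rw [spectrum.mem_iff, map_zero, zero_sub, IsUnit.neg_iff,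
        Matrix.isUnit_iff_isUnit_det, isUnit_iff_ne_zero, not_not]
      have : (H.map (algebraMap ℝ ℂ)).det = algebraMap ℝ ℂ H.det := by
        rw [RingHom.map_det]; rfl
      rw [this, hdetH, map_zero]
    simpa using hspec 0 h0mem
  · -- spanning tree → all eigenvalues positive real part
    intro hreach μ hμ
    by_contra hre
    push_neg at hre
    obtain ⟨v, hv, hmv⟩ := (stmt19_mem_spectrum _ μ).mp hμ
    obtain ⟨iw, hiw⟩ := Function.ne_iff.mp hv
    obtain ⟨i₀, -, hmax⟩ := Finset.exists_max_image univ (fun i => ‖v i‖)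
      ⟨iw, Finset.mem_univ iw⟩
    set M : ℝ := ‖v i₀‖ with hM
    have hmax' : ∀ j, ‖v j‖ ≤ M := fun j => hmax j (Finset.mem_univ j)
    have hMpos : 0 < M :=
      lt_of_lt_of_le (norm_pos_iff.mpr hiw) (hmax' iw)
    have key : ∀ i : Fin N, ‖v i‖ = M →
        a i.succ 0 = 0 ∧ ∀ j : Fin N, 0 < a i.succ j.succ → ‖v j‖ = M := by
      intro i hi
      have hrowv := congrFun hmv i
      simp only [Matrix.mulVec, dotProduct, Pi.smul_apply, smul_eq_mul,
        Matrix.map_apply, Complex.coe_algebraMap] at hrowv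
      -- rewrite entries
      have hentry : ∀ j, ((H i j : ℝ) : ℂ) * v j
          = ((if i = j then (d i : ℂ) else 0) - (a i.succ j.succ : ℂ)) * v j := by
        intro j
        rw [hsplit i j]
        split_ifs with h <;> push_cast <;> ring
      rw [Finset.sum_congr rfl fun j _ => hentry j] at hrowv
      have heq : ((d i : ℂ) - μ) * v i = ∑ j, (a i.succ j.succ : ℂ) * v j := by
        have hsum1 : ∑ j, ((if i = j then (d i : ℂ) else 0) - (a i.succ j.succ : ℂ)) * v j
            = (d i : ℂ) * v i - ∑ j, (a i.succ j.succ : ℂ) * v j := by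
          simp only [sub_mul, ite_mul, zero_mul]
          rw [Finset.sum_sub_distrib]
          congr 1
          simp [Finset.sum_ite_eq]
        rw [hsum1] at hrowv
        rw [sub_mul]
        linear_combination hrowv
      set S : ℝ := ∑ j : Fin N, a i.succ j.succ with hS
      have hSd : d i = a i.succ 0 + S := hrow i
      have hSled : S ≤ d i := by
        rw [hSd]; linarith [hnonneg i.succ 0]
      -- chain of inequalities
      have h1 : d i ≤ ‖(d i : ℂ) - μ‖ := by
        have := Complex.re_le_norm ((d i : ℂ) - μ)
        simp only [Complex.sub_re, Complex.ofReal_re] at this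
        linarith
      have h2 : ‖∑ j, (a i.succ j.succ : ℂ) * v j‖
          ≤ ∑ j, a i.succ j.succ * ‖v j‖ := by
        refine le_trans (norm_sum_le _ _) ?_
        refine Finset.sum_le_sum fun j _ => ?_
        rw [norm_mul, Complex.norm_real, Real.norm_of_nonneg (hnonneg _ _)]
      have h3 : ∑ j, a i.succ j.succ * ‖v j‖ ≤ S * M := by
        rw [hS, Finset.sum_mul]
        exact Finset.sum_le_sum fun j _ =>
          mul_le_mul_of_nonneg_left (hmax' j) (hnonneg _ _)
      have hchain : d i * M ≤ ∑ j, a i.succ j.succ * ‖v j‖ := by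
        calc d i * M ≤ ‖(d i : ℂ) - μ‖ * M :=
              mul_le_mul_of_nonneg_right h1 hMpos.le
          _ = ‖((d i : ℂ) - μ) * v i‖ := by
              rw [norm_mul, hi]
          _ = ‖∑ j, (a i.succ j.succ : ℂ) * v j‖ := by rw [heq]
          _ ≤ _ := h2
      have hSM : S * M ≤ d i * M := mul_le_mul_of_nonneg_right hSled hMpos.le
      have hdS : d i = S := by
        nlinarith [le_trans hchain h3]
      have ha0 : a i.succ 0 = 0 := by
        rw [hSd] at hdS; linarith
      have hsum : ∑ j, a i.succ j.succ * ‖v j‖ = S * M := by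
        have := le_trans hchain h3
        rw [hdS] at hchain
        linarith
      have hterm : ∀ j : Fin N, a i.succ j.succ * (M - ‖v j‖) = 0 := by
        have hzero : ∑ j, a i.succ j.succ * (M - ‖v j‖) = 0 := by
          have : ∑ j, a i.succ j.succ * (M - ‖v j‖)
              = S * M - ∑ j, a i.succ j.succ * ‖v j‖ := by
            rw [hS, Finset.sum_mul, ← Finset.sum_sub_distrib]
            exact Finset.sum_congr rfl fun j _ => by ring
          rw [this, hsum, sub_self]
        intro j
        have := (Finset.sum_eq_zero_iff_of_nonneg fun j _ =>
          mul_nonneg (hnonneg _ _) (by linarith [hmax' j])).mp hzero j (Finset.mem_univ j)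
        exact this
      refine ⟨ha0, fun j hj => ?_⟩
      have := hterm j
      rcases mul_eq_zero.mp this with h | h
      · exact absurd h (ne_of_gt hj)
      · linarith [hmax' j]
    -- induction along the reachability relation
    have noreach : ∀ k : Fin (N + 1), Relation.ReflTransGen (fun j i => 0 < a i j) 0 k →
        ∀ i : Fin N, i.succ = k → ‖v i‖ ≠ M := by
      intro k hk
      induction hk with
      | refl => exact fun i hik _ => Fin.succ_ne_zero i hik
      | @tail b c hb hbc ih =>
        intro i hik habs
        obtain ⟨ha0, hclose⟩ := key i habs
        have hbc' : 0 < a i.succ b := by rw [hik]; exact hbc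
        rcases eq_or_ne b 0 with hb0 | hb0
        · rw [hb0, ha0] at hbc'; exact lt_irrefl 0 hbc'
        · have hb' : (b.pred hb0).succ = b := Fin.succ_pred b hb0
          have : 0 < a i.succ (b.pred hb0).succ := by rwa [hb']
          exact ih (b.pred hb0) hb' (hclose _ this)
    exact noreach i₀.succ (hreach i₀.succ) i₀ rfl rfl
end
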